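/- arXiv:1908.00217 — 2 statements merged into one kernel-verified Lean document; each statement's English description precedes it below -/
import Mathlib

section
/- Let {z_n} be a sequence of distinct nonzero complex numbers of finite genus p ≥ 0, and let f(z) = ∏_{n=1}^∞ (1 − z/z_n) e_p(z/z_n) be the associated canonical product (which has simple zeros at the z_n). Then for every k, −f''(z_k)/f'(z_k) = −2p/z_k + 2 Σ_{n≠k} (z_k/z_n)^p · 1/(z_n − z_k). -/
/-- Weierstrass convergence factor: e_0(z) = 1 and e_p(z) = exp(∑_{j=1}^p z^j/j). -/
noncomputable def weierE (p : ℕ) (z : ℂ) : ℂ :=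
  Complex.exp (∑ j ∈ Finset.range p, z ^ (j + 1) / (j + 1))

/-- The truncated log series. -/
noncomputable def weierS (p : ℕ) (z : ℂ) : ℂ :=
  ∑ j ∈ Finset.range p, z ^ (j + 1) / (j + 1)

lemma weierE_eq (p : ℕ) (z : ℂ) : weierE p z = Complex.exp (weierS p z) := rfl

lemma weierE_ne_zero (p : ℕ) (z : ℂ) : weierE p z ≠ 0 := Complex.exp_ne_zero _

/-- Tail bound for the log of a Weierstrass factor. -/
lemma logTail_bound (p : ℕ) {u : ℂ} (hu : ‖u‖ ≤ 1/2) :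
    ‖Complex.log (1 - u) + weierS p u‖ ≤ 2 * ‖u‖ ^ (p + 1) := by
  have hu1 : ‖u‖ < 1 := lt_of_le_of_lt hu (by norm_num)
  have hs := Complex.hasSum_taylorSeries_neg_log hu1
  have hlog : Complex.log (1 - u) = -∑' n : ℕ, u ^ n / n := by
    rw [hs.tsum_eq]; ring
  have hpart : ∑ n ∈ Finset.range (p+1), u ^ n / (n : ℂ) = weierS p u := by
    rw [Finset.sum_range_succ']
    simp [weierS]
  have hsplit := Summable.sum_add_tsum_nat_add (f := fun n : ℕ => u ^ n / (n : ℂ)) (p+1) hs.summable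
  have hkey : Complex.log (1 - u) + weierS p u = -∑' i : ℕ, u ^ (i + (p+1)) / ((i + (p+1) : ℕ) : ℂ) := by
    rw [hlog, ← hpart]
    have := hsplit
    push_cast at this ⊢
    linear_combination this
  rw [hkey, norm_neg]
  have hgeom : HasSum (fun i : ℕ => ‖u‖ ^ (p+1) * (1/2 : ℝ) ^ i) (‖u‖ ^ (p+1) * 2) := by
    have h := (hasSum_geometric_of_lt_one (by norm_num : (0:ℝ) ≤ 1/2) (by norm_num)).mul_left
      (‖u‖ ^ (p+1))
    have h2 : ((1:ℝ) - 1/2)⁻¹ = 2 := by norm_num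
    rwa [h2] at h
  have hbound : ∀ i : ℕ, ‖u ^ (i + (p+1)) / ((i + (p+1) : ℕ) : ℂ)‖ ≤ ‖u‖ ^ (p+1) * (1/2 : ℝ) ^ i := by
    intro i
    rw [norm_div, norm_pow]
    have h1 : (1 : ℝ) ≤ ‖((i + (p+1) : ℕ) : ℂ)‖ := by
      rw [Complex.norm_natCast]
      exact_mod_cast Nat.one_le_iff_ne_zero.mpr (by omega)
    have h2 : ‖u‖ ^ (i + (p+1)) = ‖u‖ ^ i * ‖u‖ ^ (p+1) := pow_add _ _ _
    have h3 : ‖u‖ ^ i ≤ (1/2 : ℝ) ^ i := pow_le_pow_left₀ (norm_nonneg u) hu i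
    calc ‖u‖ ^ (i + (p+1)) / ‖((i + (p+1) : ℕ) : ℂ)‖ ≤ ‖u‖ ^ (i + (p+1)) := by
          apply div_le_self (by positivity) h1
      _ = ‖u‖ ^ i * ‖u‖ ^ (p+1) := h2
      _ ≤ (1/2:ℝ) ^ i * ‖u‖ ^ (p+1) := by
          apply mul_le_mul_of_nonneg_right h3 (by positivity)
      _ = ‖u‖ ^ (p+1) * (1/2:ℝ) ^ i := by ring
  calc ‖∑' i : ℕ, u ^ (i + (p+1)) / ((i + (p+1) : ℕ) : ℂ)‖ ≤ ‖u‖ ^ (p+1) * 2 :=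
        tsum_of_norm_bounded hgeom hbound
    _ = 2 * ‖u‖ ^ (p+1) := by ring

section aux

/-- The standard factor of the canonical product. -/
noncomputable def origF (z : ℕ → ℂ) (p : ℕ) (n : ℕ) (w : ℂ) : ℂ :=
  (1 - w / z n) * weierE p (w / z n)

/-- The modified factor: at index `k` the vanishing linear part is removed. -/
noncomputable def modF (z : ℕ → ℂ) (p k : ℕ) (n : ℕ) (w : ℂ) : ℂ :=
  if n = k then weierE p (w / z k) * (-(z k)⁻¹) else origF z p n w

/-- The principal branch candidate for the log of a factor. -/
noncomputable def Lf (z : ℕ → ℂ) (p : ℕ) (n : ℕ) (w : ℂ) : ℂ :=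
  Complex.log (1 - w / z n) + weierS p (w / z n)

lemma diff_weierS (p : ℕ) (c : ℂ) : Differentiable ℂ (fun w => weierS p (w / c)) := by
  unfold weierS
  apply Differentiable.fun_sum
  intro j _
  apply Differentiable.div_const
  apply Differentiable.pow
  exact (differentiable_id).div_const c

lemma diff_weierE (p : ℕ) (c : ℂ) : Differentiable ℂ (fun w => weierE p (w / c)) := by
  simp only [weierE_eq]
  exact (diff_weierS p c).cexp

lemma diff_origF (z : ℕ → ℂ) (p n : ℕ) : Differentiable ℂ (origF z p n) := by
  unfold origF
  exact ((differentiable_const 1).sub (differentiable_id.div_const _)).mul (diff_weierE p (z n))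

lemma diff_modF (z : ℕ → ℂ) (p k n : ℕ) : Differentiable ℂ (modF z p k n) := by
  unfold modF
  split
  · exact (diff_weierE p (z k)).mul_const _
  · exact diff_origF z p n

lemma exp_Lf (z : ℕ → ℂ) (p n : ℕ) {w : ℂ} (hw : w / z n ≠ 1) :
    Complex.exp (Lf z p n w) = origF z p n w := by
  rw [Lf, Complex.exp_add, origF, weierE_eq, Complex.exp_log (sub_ne_zero.mpr (Ne.symm hw))]

/-- The derivative of `weierS p (w / c)`. -/
lemma hasDerivAt_weierS (p : ℕ) (c : ℂ) (hc : c ≠ 0) (x : ℂ) :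
    HasDerivAt (fun w => weierS p (w / c)) (∑ j ∈ Finset.range p, x ^ j / c ^ (j + 1)) x := by
  unfold weierS
  apply HasDerivAt.fun_sum
  intro j _
  have h : HasDerivAt (fun w : ℂ => (w / c) ^ (j + 1) / ((j : ℂ) + 1))
      ((((j : ℕ) + 1 : ℕ) * (x / c) ^ j * (1 / c)) / ((j : ℂ) + 1)) x := by
    apply HasDerivAt.div_const
    have := ((hasDerivAt_id x).div_const c).fun_pow (j + 1)
    simpa using this
  refine h.congr_deriv ?_
  have hj : ((j : ℂ) + 1) ≠ 0 := Nat.cast_add_one_ne_zero j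
  push_cast
  field_simp
  rw [div_pow, pow_succ]
  field_simp

lemma logDeriv_weierE_comp (p : ℕ) (c : ℂ) (hc : c ≠ 0) (x : ℂ) :
    logDeriv (fun w => weierE p (w / c)) x = ∑ j ∈ Finset.range p, x ^ j / c ^ (j + 1) := by
  have h := ((hasDerivAt_weierS p c hc x).cexp)
  simp only [weierE_eq]
  rw [logDeriv_apply, h.deriv]
  exact mul_div_cancel_left₀ _ (Complex.exp_ne_zero _)

set_option maxHeartbeats 1000000 in
lemma logDeriv_origF (z : ℕ → ℂ) (p : ℕ) {n k : ℕ} (hzn : z n ≠ 0) (hzk : z k ≠ 0)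
    (hne : z n ≠ z k) :
    logDeriv (origF z p n) (z k) = -((z k / z n) ^ p * (z n - z k)⁻¹) := by
  have hq : z k / z n ≠ 1 := by
    intro h
    rw [div_eq_one_iff_eq hzn] at h
    exact hne h.symm
  have h1 : (1 : ℂ) - z k / z n ≠ 0 := sub_ne_zero.mpr (Ne.symm hq)
  have horig : origF z p n = fun w => (1 - w / z n) * weierE p (w / z n) := rfl
  have hmul := logDeriv_mul (f := fun w => 1 - w / z n) (g := fun w => weierE p (w / z n))
      (z k) h1 (weierE_ne_zero _ _)
      (((differentiable_const 1).sub (differentiable_id.div_const _)).differentiableAt)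
      ((diff_weierE p (z n)).differentiableAt)
  rw [horig, hmul, logDeriv_weierE_comp p (z n) hzn]
  have hd : HasDerivAt (fun w : ℂ => 1 - w / z n) (-(1 / z n)) (z k) := by
    simpa using ((hasDerivAt_id (z k)).div_const (z n)).const_sub 1
  rw [logDeriv_apply, hd.deriv]
  have hgeom : ∑ j ∈ Finset.range p, (z k) ^ j / (z n) ^ (j + 1) =
      (((z k / z n) ^ p - 1) / (z k / z n - 1)) * (z n)⁻¹ := by
    rw [← geom_sum_eq hq p, Finset.sum_mul]
    apply Finset.sum_congr rfl
    intro j _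
    rw [div_pow, pow_succ]
    field_simp
  rw [hgeom]
  have hnk : z n - z k ≠ 0 := sub_ne_zero.mpr hne
  have hq1 : z k / z n - 1 ≠ 0 := sub_ne_zero.mpr hq
  have hfac : z n - z k = z n * (1 - z k / z n) := by field_simp
  have hneg : z k / z n - 1 = -(1 - z k / z n) := by ring
  rw [hfac, mul_inv, hneg]
  generalize (z k / z n) ^ p = qp
  have hkn : z k - z n ≠ 0 := sub_ne_zero.mpr (fun h => hne h.symm)
  have h2 : z n * z k - z n ^ 2 ≠ 0 := by
    have hh : z n * z k - z n ^ 2 = z n * (z k - z n) := by ring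
    rw [hh]; exact mul_ne_zero hzn hkn
  field_simp [h2]
  ring

lemma origF_ne_zero (z : ℕ → ℂ) (p n : ℕ) {w : ℂ} (hw : w ≠ z n) : origF z p n w ≠ 0 := by
  apply mul_ne_zero _ (weierE_ne_zero _ _)
  intro h
  apply hw
  have : w / z n = 1 := by linear_combination -h
  by_cases hzn : z n = 0
  · rw [hzn, div_zero] at this; exact absurd this.symm one_ne_zero
  · rw [div_eq_one_iff_eq hzn] at this; exact this

lemma logDeriv_modF_k (z : ℕ → ℂ) (p k : ℕ) (hzk : z k ≠ 0) :
    logDeriv (modF z p k k) (z k) = p * (z k)⁻¹ := by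
  have h : modF z p k k = fun w => weierE p (w / z k) * (-(z k)⁻¹) := by
    funext w; simp [modF]
  rw [h, logDeriv_mul_const _ _ (by simpa using hzk), logDeriv_weierE_comp p (z k) hzk]
  have : ∀ j ∈ Finset.range p, (z k) ^ j / (z k) ^ (j + 1) = (z k)⁻¹ := by
    intro j _
    rw [pow_succ, ← div_div, div_self (pow_ne_zero j hzk), one_div]
  rw [Finset.sum_congr rfl this, Finset.sum_const, Finset.card_range, nsmul_eq_mul]

lemma tprod_eq_zero_of {v : ℕ → ℂ} {m : ℕ} (hm : v m = 0) : ∏' n, v n = 0 := by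
  have h : HasProd v 0 := by
    rw [HasProd]
    have hev : ∀ᶠ s : Finset ℕ in Filter.atTop, ∏ i ∈ s, v i = 0 := by
      filter_upwards [Filter.eventually_ge_atTop ({m} : Finset ℕ)] with s hs
      exact Finset.prod_eq_zero (Finset.singleton_subset_iff.mp hs) hm
    exact Filter.Tendsto.congr' (hev.mono fun s hs => hs.symm) tendsto_const_nhds
  exact h.tprod_eq

lemma tendstoUniformlyOn_shift {α : Type*} {F : ℕ → ℂ → α} {G : ℂ → α} [UniformSpace α]
    {s : Set ℂ} (N0 : ℕ) (h : TendstoUniformlyOn (fun M => F (M + N0)) G Filter.atTop s) :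
    TendstoUniformlyOn F G Filter.atTop s := by
  intro u hu
  have h2 := h u hu
  rw [Filter.eventually_atTop] at h2 ⊢
  obtain ⟨M0, hM0⟩ := h2
  refine ⟨M0 + N0, fun N hN => ?_⟩
  have h3 := hM0 (N - N0) (by omega)
  simp only [Nat.sub_add_cancel (show N0 ≤ N by omega)] at h3
  exact h3

end aux

set_option maxHeartbeats 1000000 in
/-- Formula (5.3): for a canonical product f of genus p with (distinct, nonzero) zeros z_n,
−f''(z_k)/f'(z_k) = −2p/z_k + 2 Σ_{n≠k} (z_k/z_n)^p / (z_n − z_k). -/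
theorem stmt15 (z : ℕ → ℂ) (hz0 : ∀ n, z n ≠ 0) (hzinj : Function.Injective z)
    (hdiscr : ∀ r : ℝ, {n : ℕ | ‖z n‖ ≤ r}.Finite)
    (p : ℕ) (hp : Summable fun n : ℕ => (‖z n‖)⁻¹ ^ (p + 1))
    (hp' : ¬ Summable fun n : ℕ => (‖z n‖)⁻¹ ^ p)
    (f : ℂ → ℂ) (hf : ∀ w : ℂ, f w = ∏' n : ℕ, ((1 - w / z n) * weierE p (w / z n))) :
    ∀ k : ℕ, -(deriv (deriv f) (z k)) / deriv f (z k) =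
      -(2 * (p : ℂ)) / z k +
        2 * ∑' n : {n : ℕ // n ≠ k}, (z k / z (n : ℕ)) ^ p * (z (n : ℕ) - z k)⁻¹ := by
  classical
  intro k
  -- `f` is the canonical product
  have hforig : ∀ w : ℂ, f w = ∏' n : ℕ, origF z p n w := hf
  set R : ℝ := ‖z k‖ + 1 with hRdef
  have hR0 : 0 < R := by positivity
  have hRk : ‖z k‖ < R := by simp [hRdef]
  set U : Set ℂ := Metric.ball (0 : ℂ) R with hUdef
  have hUopen : IsOpen U := Metric.isOpen_ball
  have hzkU : z k ∈ U := by
    simp only [hUdef, Metric.mem_ball, dist_zero_right]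
    exact hRk
  have hUbound : ∀ w ∈ U, ‖w‖ < R := by
    intro w hw
    simpa [hUdef, Metric.mem_ball, dist_zero_right] using hw
  -- the cutoff N0
  obtain ⟨N0, hN0⟩ : ∃ N0 : ℕ, k < N0 ∧ ∀ n, N0 ≤ n → 2 * R < ‖z n‖ := by
    set T : Finset ℕ := (hdiscr (2 * R)).toFinset ∪ {k} with hT
    refine ⟨T.sup id + 1, ?_, ?_⟩
    · have h1 : k ∈ T := by simp [hT]
      have h2 := Finset.le_sup (f := id) h1
      simp only [id] at h2
      omega
    · intro n hn
      by_contra hcon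
      push_neg at hcon
      have : n ∈ T := by simp [hT, Set.Finite.mem_toFinset]; right; exact hcon
      have h3 := Finset.le_sup (f := id) this
      simp only [id] at h3
      omega
  obtain ⟨hkN0, hN0big⟩ := hN0
  -- the summable majorant
  set u : ℕ → ℝ := fun n => 2 * R ^ (p + 1) * (‖z n‖)⁻¹ ^ (p + 1) with hudef
  have hu : Summable u := hp.mul_left _
  have hu0 : ∀ n, 0 ≤ u n := by
    intro n
    simp only [hudef]
    positivity
  -- basic smallness estimates for good indices
  have hsmall : ∀ n, N0 ≤ n → ∀ w ∈ U, ‖w / z n‖ ≤ 1 / 2 := by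
    intro n hn w hw
    have h1 : 2 * R < ‖z n‖ := hN0big n hn
    have h2 : ‖w‖ < R := hUbound w hw
    rw [norm_div]
    rw [div_le_iff₀ (norm_pos_iff.mpr (hz0 n))]
    linarith
  have hLfbound : ∀ n, N0 ≤ n → ∀ w ∈ U, ‖Lf z p n w‖ ≤ u n := by
    intro n hn w hw
    have h1 := logTail_bound p (hsmall n hn w hw)
    refine h1.trans ?_
    simp only [hudef]
    have h2 : ‖w / z n‖ ≤ R * (‖z n‖)⁻¹ := by
      rw [norm_div]
      rw [div_eq_mul_inv]
      apply mul_le_mul_of_nonneg_right (le_of_lt (hUbound w hw))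
      positivity
    calc 2 * ‖w / z n‖ ^ (p+1) ≤ 2 * (R * (‖z n‖)⁻¹) ^ (p+1) := by
          apply mul_le_mul_of_nonneg_left (pow_le_pow_left₀ (norm_nonneg _) h2 _) (by norm_num)
      _ = 2 * R ^ (p+1) * (‖z n‖)⁻¹ ^ (p+1) := by rw [mul_pow]; ring
  have huerr : ∀ n, N0 ≤ n → u n ≤ 1 := by
    intro n hn
    have h1 : 2 * R < ‖z n‖ := hN0big n hn
    have h2 : R * (‖z n‖)⁻¹ ≤ 1/2 := by
      rw [mul_inv_le_iff₀ (norm_pos_iff.mpr (hz0 n))]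
      linarith
    have h3 : (R * (‖z n‖)⁻¹ : ℝ) ^ (p+1) ≤ (1/2 : ℝ) ^ (p+1) :=
      pow_le_pow_left₀ (by positivity) h2 _
    have h4 : ((1:ℝ)/2) ^ (p+1) ≤ 1/2 := by
      apply pow_le_of_le_one (by norm_num) (by norm_num) (by omega)
    have : u n = 2 * (R * (‖z n‖)⁻¹) ^ (p+1) := by
      simp only [hudef, mul_pow]; ring
    rw [this]
    nlinarith
  -- logs of good factors
  have hlog_eq : ∀ n, N0 ≤ n → ∀ w ∈ U, Complex.log (origF z p n w) = Lf z p n w := by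
    intro n hn w hw
    have hne1 : w / z n ≠ 1 := by
      intro h
      have := hsmall n hn w hw
      rw [h] at this
      norm_num at this
    have hnorm : ‖Lf z p n w‖ ≤ 1 := (hLfbound n hn w hw).trans (huerr n hn)
    have him : |(Lf z p n w).im| ≤ 1 := (Complex.abs_im_le_norm _).trans hnorm
    rw [← exp_Lf z p n hne1, Complex.log_exp]
    · rw [abs_le] at him
      linarith [Real.pi_gt_three]
    · rw [abs_le] at him
      linarith [Real.pi_gt_three]
  -- the modified partial products and limit function
  set Q : ℕ → ℂ → ℂ := fun N w => ∏ n ∈ Finset.range N, modF z p k n w with hQdef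
  set G : ℂ → ℂ := fun w =>
    Q N0 w * Complex.exp (∑' i : ℕ, Lf z p (i + N0) w) with hGdef
  -- each partial product is entire
  have hQdiff : ∀ N, Differentiable ℂ (Q N) := by
    intro N
    apply Differentiable.fun_finsetProd
    intro n _
    exact diff_modF z p k n
  -- uniform convergence
  have hTU : TendstoUniformlyOn Q G Filter.atTop U := by
    set P : ℕ → ℂ → ℂ := fun M w => ∑ i ∈ Finset.range M, Lf z p (i + N0) w with hPdef
    set Linf : ℂ → ℂ := fun w => ∑' i : ℕ, Lf z p (i + N0) w with hLinfdef
    have hu' : Summable fun i => u (i + N0) := (summable_nat_add_iff N0).mpr hu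
    have hPU : TendstoUniformlyOn P Linf Filter.atTop U :=
      tendstoUniformlyOn_tsum_nat hu' fun i w hw => hLfbound (i + N0) (Nat.le_add_left _ _) w hw
    set C0 : ℝ := ∑' i, u (i + N0) with hC0def
    have hC0 : ∀ w ∈ U, ‖Linf w‖ ≤ C0 := fun w hw =>
      tsum_of_norm_bounded hu'.hasSum fun i => hLfbound (i + N0) (Nat.le_add_left _ _) w hw
    obtain ⟨C1, hC1⟩ := (isCompact_closedBall (0:ℂ) R).exists_bound_of_continuousOn
      ((hQdiff N0).continuous.continuousOn)
    have hC1U : ∀ w ∈ U, ‖Q N0 w‖ ≤ C1 := fun w hw => hC1 w (Metric.ball_subset_closedBall hw)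
    have hC1nn : 0 ≤ C1 :=
      le_trans (norm_nonneg _) (hC1 0 (Metric.mem_closedBall_self hR0.le))
    have hexpLinf : ∀ w ∈ U, ‖Complex.exp (Linf w)‖ ≤ Real.exp C0 := by
      intro w hw
      rw [Complex.norm_exp]
      apply Real.exp_le_exp.mpr
      exact (Complex.re_le_norm _).trans (hC0 w hw)
    have hQsplit : ∀ M : ℕ, ∀ w ∈ U, Q (M + N0) w = Q N0 w * Complex.exp (P M w) := by
      intro M w hw
      have hIco : ∀ n ∈ Finset.Ico N0 (M + N0), modF z p k n w = Complex.exp (Lf z p n w) := by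
        intro n hn
        rw [Finset.mem_Ico] at hn
        have hn1 : N0 ≤ n := hn.1
        have hnk : n ≠ k := by omega
        have hne1 : w / z n ≠ 1 := by
          intro h
          have hs2 := hsmall n hn1 w hw
          rw [h] at hs2
          norm_num at hs2
        simp only [modF, if_neg hnk]
        exact (exp_Lf z p n hne1).symm
      have hsum : ∑ n ∈ Finset.Ico N0 (M + N0), Lf z p n w = P M w := by
        rw [Finset.sum_Ico_eq_sum_range]
        simp only [Nat.add_sub_cancel, hPdef]
        exact Finset.sum_congr rfl fun i _ => by rw [Nat.add_comm N0 i]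
      have e1 : Q (M + N0) w = Q N0 w * ∏ n ∈ Finset.Ico N0 (M + N0), modF z p k n w := by
        simp only [hQdef, Finset.range_eq_Ico]
        rw [← Finset.prod_Ico_consecutive (fun n => modF z p k n w)
          (Nat.zero_le N0) (Nat.le_add_left N0 M)]
      rw [e1, Finset.prod_congr rfl hIco, ← Complex.exp_sum, hsum]
    apply tendstoUniformlyOn_shift N0
    rw [Metric.tendstoUniformlyOn_iff]
    intro ε hε
    set A : ℝ := 2 * C1 * Real.exp C0 with hAdef
    have hA : 0 ≤ A := by positivity
    set δ : ℝ := min 1 (ε / (A + 1)) with hδdef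
    have hδ0 : 0 < δ := lt_min one_pos (by positivity)
    have hP := (Metric.tendstoUniformlyOn_iff.mp hPU) δ hδ0
    filter_upwards [hP] with M hM w hw
    have hGw : G w = Q N0 w * Complex.exp (Linf w) := by simp only [hGdef, hLinfdef]
    rw [dist_eq_norm, hQsplit M w hw, hGw]
    have hdist := hM w hw
    rw [dist_eq_norm] at hdist
    have hnormPL : ‖P M w - Linf w‖ = ‖Linf w - P M w‖ := norm_sub_rev _ _
    have hle1 : ‖P M w - Linf w‖ ≤ 1 := by
      rw [hnormPL]
      exact le_of_lt (lt_of_lt_of_le hdist (min_le_left _ _))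
    have hsub1 : ‖Complex.exp (P M w - Linf w) - 1‖ ≤ 2 * ‖P M w - Linf w‖ := by
      have h := Complex.norm_exp_sub_one_le (x := P M w - Linf w) hle1
      exact h
    have key : Q N0 w * Complex.exp (Linf w) - Q N0 w * Complex.exp (P M w)
        = Q N0 w * Complex.exp (Linf w) * (1 - Complex.exp (P M w - Linf w)) := by
      rw [mul_sub, mul_one]
      congr 1
      rw [mul_assoc, ← Complex.exp_add]
      congr 2
      ring
    rw [key]
    have hnn1 : ‖1 - Complex.exp (P M w - Linf w)‖ = ‖Complex.exp (P M w - Linf w) - 1‖ :=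
      norm_sub_rev _ _
    calc ‖Q N0 w * Complex.exp (Linf w) * (1 - Complex.exp (P M w - Linf w))‖
        = ‖Q N0 w‖ * ‖Complex.exp (Linf w)‖ * ‖1 - Complex.exp (P M w - Linf w)‖ := by
          rw [norm_mul, norm_mul]
      _ ≤ C1 * Real.exp C0 * (2 * ‖P M w - Linf w‖) := by
          apply mul_le_mul
          · apply mul_le_mul (hC1U w hw) (hexpLinf w hw) (norm_nonneg _) hC1nn
          · rw [hnn1]; exact hsub1
          · exact norm_nonneg _
          · positivity
      _ = A * ‖P M w - Linf w‖ := by rw [hAdef]; ring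
      _ < ε := by
          have h7 : A * ‖P M w - Linf w‖ ≤ A * δ := by
            apply mul_le_mul_of_nonneg_left _ hA
            rw [hnormPL]
            exact le_of_lt hdist
          have hδ2 : δ ≤ ε / (A + 1) := min_le_right _ _
          have hA1 : (0:ℝ) < A + 1 := by linarith
          have h8 : A * δ < ε := by
            have h9 : A * δ ≤ A * (ε / (A + 1)) := mul_le_mul_of_nonneg_left hδ2 hA
            have h10 : A * (ε / (A + 1)) < ε := by
              rw [mul_div_assoc', div_lt_iff₀ hA1]
              nlinarith
            linarith
          linarith
  have hTLU : TendstoLocallyUniformlyOn Q G Filter.atTop U := hTU.tendstoLocallyUniformlyOn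
  have hQdiffOn : ∀ᶠ N in Filter.atTop, DifferentiableOn ℂ (Q N) U :=
    Filter.Eventually.of_forall fun N => (hQdiff N).differentiableOn
  have hGdiff : DifferentiableOn ℂ G U := hTLU.differentiableOn hQdiffOn hUopen
  have hTLU' : TendstoLocallyUniformlyOn (deriv ∘ Q) (deriv G) Filter.atTop U :=
    hTLU.deriv hQdiffOn hUopen
  have hQ'diffOn : ∀ᶠ N in Filter.atTop, DifferentiableOn ℂ (deriv (Q N)) U := by
    refine Filter.Eventually.of_forall fun N => ?_
    have h1 : AnalyticOnNhd ℂ (Q N) Set.univ :=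
      (hQdiff N).differentiableOn.analyticOnNhd isOpen_univ
    exact (h1.deriv.differentiableOn).mono (Set.subset_univ U)
  have hG'diff : DifferentiableOn ℂ (deriv G) U := hTLU'.differentiableOn hQ'diffOn hUopen
  -- nonvanishing of the factors at z k
  have hhf_ne : ∀ n, modF z p k n (z k) ≠ 0 := by
    intro n
    by_cases hn : n = k
    · simp only [modF, if_pos hn]
      exact mul_ne_zero (weierE_ne_zero _ _) (by simpa using hz0 k)
    · simp only [modF, if_neg hn]
      exact origF_ne_zero z p n fun h => hn (hzinj h.symm)
  have hGk : G (z k) ≠ 0 := by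
    apply mul_ne_zero _ (Complex.exp_ne_zero _)
    exact Finset.prod_ne_zero_iff.mpr fun n _ => hhf_ne n
  -- local factorization of f
  obtain ⟨r, hr0, hrU, hfeq⟩ :
      ∃ r : ℝ, 0 < r ∧ Metric.ball (z k) r ⊆ U ∧
        ∀ w ∈ Metric.ball (z k) r, f w = (w - z k) * G w := by
    set T : Finset ℕ := (Finset.range N0).erase k with hT
    obtain ⟨r, hr0, hr1, hrdist⟩ : ∃ r : ℝ, 0 < r ∧ r ≤ 1 ∧ ∀ n ∈ T, r ≤ dist (z k) (z n) := by
      by_cases hTe : T.Nonempty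
      · refine ⟨min 1 (T.inf' hTe fun n => dist (z k) (z n)), ?_, min_le_left _ _, ?_⟩
        · apply lt_min one_pos
          rw [Finset.lt_inf'_iff]
          intro n hnT
          have hzkn : z k ≠ z n := fun h => (Finset.mem_erase.mp hnT).1 (hzinj h.symm)
          exact dist_pos.mpr hzkn
        · intro n hnT
          exact (min_le_right _ _).trans (Finset.inf'_le _ hnT)
      · exact ⟨1, one_pos, le_refl 1, fun n hnT => absurd ⟨n, hnT⟩ hTe⟩
    have hballU : Metric.ball (z k) r ⊆ U := by
      intro w hw
      simp only [Metric.mem_ball] at hw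
      simp only [hUdef, Metric.mem_ball, dist_zero_right]
      have htri : dist w 0 ≤ dist w (z k) + dist (z k) 0 := dist_triangle _ _ _
      simp only [dist_zero_right] at htri
      have : ‖z k‖ + 1 = R := by rw [hRdef]
      linarith
    refine ⟨r, hr0, hballU, ?_⟩
    intro w hw
    by_cases hwk : w = z k
    · subst hwk
      have h0 : origF z p k (z k) = 0 := by
        simp only [origF]
        rw [div_self (hz0 k)]
        ring
      rw [hforig (z k), tprod_eq_zero_of h0]
      ring
    · have hwU : w ∈ U := hballU hw
      have hne : ∀ n, w ≠ z n := by
        intro n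
        by_cases hnN : N0 ≤ n
        · intro h
          have h1 : 2 * R < ‖z n‖ := hN0big n hnN
          have h2 : ‖w‖ < R := hUbound w hwU
          rw [h] at h2
          linarith
        · by_cases hnk : n = k
          · subst hnk; exact hwk
          · intro h
            have hnT : n ∈ T := by
              rw [hT, Finset.mem_erase]
              exact ⟨hnk, Finset.mem_range.mpr (by omega)⟩
            have h1 := hrdist n hnT
            rw [← h] at h1
            rw [Metric.mem_ball, dist_comm] at hw
            linarith
      have horig_ne : ∀ n, origF z p n w ≠ 0 := fun n => origF_ne_zero z p n (hne n)
      have hsumL : Summable fun i : ℕ => Lf z p (i + N0) w := by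
        apply Summable.of_norm_bounded (g := fun i => u (i + N0))
          ((summable_nat_add_iff N0).mpr hu)
        intro i
        exact hLfbound (i + N0) (Nat.le_add_left _ _) w hwU
      have hsumlog : Summable fun n => Complex.log (origF z p n w) := by
        rw [← summable_nat_add_iff N0]
        exact hsumL.congr fun i => (hlog_eq (i + N0) (Nat.le_add_left _ _) w hwU).symm
      have hprod : f w = Complex.exp (∑' n, Complex.log (origF z p n w)) := by
        rw [hforig w]
        exact (Complex.cexp_tsum_eq_tprod (f := fun n => origF z p n w)
          (fun n => horig_ne n) hsumlog).symm
      have hsplitsum : ∑' n, Complex.log (origF z p n w) =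
          ∑ n ∈ Finset.range N0, Complex.log (origF z p n w) + ∑' i, Lf z p (i + N0) w := by
        rw [← Summable.sum_add_tsum_nat_add N0 hsumlog]
        congr 1
        exact tsum_congr fun i => hlog_eq (i + N0) (Nat.le_add_left _ _) w hwU
      rw [hprod, hsplitsum, Complex.exp_add]
      have hfin : Complex.exp (∑ n ∈ Finset.range N0, Complex.log (origF z p n w)) =
          ∏ n ∈ Finset.range N0, origF z p n w := by
        rw [Complex.exp_sum]
        exact Finset.prod_congr rfl fun n _ => Complex.exp_log (horig_ne n)
      rw [hfin]
      have hkmem : k ∈ Finset.range N0 := Finset.mem_range.mpr hkN0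
      have hkval : origF z p k w = (w - z k) * modF z p k k w := by
        simp only [modF, if_pos rfl, origF, ↓reduceIte]
        field_simp [hz0 k]
        ring
      have h1 : ∏ n ∈ (Finset.range N0).erase k, origF z p n w
          = ∏ n ∈ (Finset.range N0).erase k, modF z p k n w :=
        Finset.prod_congr rfl fun n hn => by
          simp [modF, if_neg (Finset.mem_erase.mp hn).1]
      have hfactor : ∏ n ∈ Finset.range N0, origF z p n w =
          (w - z k) * ∏ n ∈ Finset.range N0, modF z p k n w := by
        rw [← Finset.mul_prod_erase _ (fun n => origF z p n w) hkmem, h1, hkval,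
          ← Finset.mul_prod_erase _ (fun n => modF z p k n w) hkmem]
        ring
      rw [hfactor]
      simp only [hGdef, hQdef]
      ring
  -- first and second derivative of f at z k
  have hball_mem : Metric.ball (z k) r ∈ nhds (z k) := Metric.ball_mem_nhds _ hr0
  have hGat : ∀ w ∈ U, DifferentiableAt ℂ G w := fun w hw =>
    hGdiff.differentiableAt (hUopen.mem_nhds hw)
  have hderivf : ∀ w ∈ Metric.ball (z k) r, deriv f w = G w + (w - z k) * deriv G w := by
    intro w hw
    have hfeqw : f =ᶠ[nhds w] fun w' => (w' - z k) * G w' :=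
      Filter.eventuallyEq_of_mem (Metric.isOpen_ball.mem_nhds hw) hfeq
    rw [hfeqw.deriv_eq]
    have h1 : HasDerivAt (fun w' : ℂ => w' - z k) 1 w := (hasDerivAt_id w).sub_const _
    have h2 := (hGat w (hrU hw)).hasDerivAt
    have h3 := h1.fun_mul h2
    rw [h3.deriv]
    ring
  have hfd1 : deriv f (z k) = G (z k) := by
    rw [hderivf (z k) (Metric.mem_ball_self hr0)]
    simp
  have hfd2 : deriv (deriv f) (z k) = 2 * deriv G (z k) := by
    have heq : deriv f =ᶠ[nhds (z k)] fun w => G w + (w - z k) * deriv G w :=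
      Filter.eventuallyEq_of_mem hball_mem hderivf
    rw [heq.deriv_eq]
    have hA : HasDerivAt G (deriv G (z k)) (z k) := (hGat _ hzkU).hasDerivAt
    have hG'at : DifferentiableAt ℂ (deriv G) (z k) :=
      hG'diff.differentiableAt (hUopen.mem_nhds hzkU)
    have hB : HasDerivAt (fun w : ℂ => (w - z k) * deriv G w)
        (1 * deriv G (z k) + (z k - z k) * deriv (deriv G) (z k)) (z k) :=
      (((hasDerivAt_id (z k)).sub_const _)).mul hG'at.hasDerivAt
    have hC := hA.fun_add hB
    rw [hC.deriv]
    ring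
  -- the logarithmic derivative sum
  set c : ℕ → ℂ := fun n => logDeriv (modF z p k n) (z k) with hcdef
  -- values of the individual logarithmic derivatives
  have hck : c k = p * (z k)⁻¹ := logDeriv_modF_k z p k (hz0 k)
  have hcn : ∀ n, n ≠ k → c n = -((z k / z n) ^ p * (z n - z k)⁻¹) := by
    intro n hn
    have h1 : modF z p k n = origF z p n := by
      funext w; simp [modF, if_neg hn]
    rw [hcdef]
    simp only [h1]
    exact logDeriv_origF z p (hz0 n) (hz0 k) (fun h => hn (hzinj h))
  have hcsum : Summable c := by
    apply Summable.of_norm_bounded_eventually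
      (g := fun n => 2 * R ^ p * (‖z n‖)⁻¹ ^ (p + 1)) (hp.mul_left _)
    rw [Filter.eventually_cofinite]
    apply Set.Finite.subset (Set.finite_Iio N0)
    intro n hn
    simp only [Set.mem_setOf_eq, not_le] at hn
    rw [Set.mem_Iio]
    by_contra hcon
    push_neg at hcon
    refine absurd ?_ (not_le.mpr hn)
    -- now N0 ≤ n
    have hnk : n ≠ k := by omega
    have habs : 2 * R < ‖z n‖ := hN0big n hcon
    rw [hcn n hnk, norm_neg, norm_mul, norm_pow, norm_inv, norm_div]
    have h1 : ‖z k‖ / ‖z n‖ ≤ R * (‖z n‖)⁻¹ := by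
      rw [div_eq_mul_inv]
      apply mul_le_mul_of_nonneg_right (le_of_lt hRk)
      positivity
    have h2 : ‖z n‖ / 2 ≤ ‖z n - z k‖ := by
      have h3 : ‖z n‖ - ‖z k‖ ≤ ‖z n - z k‖ :=
        norm_sub_norm_le (z n) (z k)
      have h4 : ‖z k‖ < R := hRk
      linarith
    have h5 : (‖z n - z k‖)⁻¹ ≤ 2 * (‖z n‖)⁻¹ := by
      have hpos : (0:ℝ) < ‖z n‖ / 2 := by
        have := norm_pos_iff.mpr (hz0 n)
        linarith
      have := inv_anti₀ hpos h2
      rwa [show (‖z n‖ / 2)⁻¹ = 2 * (‖z n‖)⁻¹ by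
        rw [div_eq_mul_inv]; rw [mul_inv]; norm_num; ring] at this
    have h6 : (‖z k‖ / ‖z n‖) ^ p ≤ (R * (‖z n‖)⁻¹) ^ p :=
      pow_le_pow_left₀ (by positivity) h1 p
    calc (‖z k‖ / ‖z n‖) ^ p * (‖z n - z k‖)⁻¹
        ≤ (R * (‖z n‖)⁻¹) ^ p * (2 * (‖z n‖)⁻¹) := by
          apply mul_le_mul h6 h5 (by positivity) (by positivity)
      _ = 2 * R ^ p * (‖z n‖)⁻¹ ^ (p + 1) := by
          rw [mul_pow, pow_succ]; ring
  have hlogG : logDeriv G (z k) = ∑' n, c n := by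
    have hQlog : ∀ N, logDeriv (Q N) (z k) = ∑ n ∈ Finset.range N, c n := by
      intro N
      exact logDeriv_prod
        (fun n _ => hhf_ne n) (fun n _ => (diff_modF z p k n).differentiableAt)
    have ht1 : Filter.Tendsto (fun N => logDeriv (Q N) (z k)) Filter.atTop
        (nhds (logDeriv G (z k))) :=
      Complex.logDeriv_tendsto hUopen hzkU hTLU hQdiffOn hGk
    have ht2 : Filter.Tendsto (fun N => ∑ n ∈ Finset.range N, c n) Filter.atTop
        (nhds (∑' n, c n)) := hcsum.hasSum.tendsto_sum_nat
    have ht1' : Filter.Tendsto (fun N => ∑ n ∈ Finset.range N, c n) Filter.atTop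
        (nhds (logDeriv G (z k))) := ht1.congr fun N => hQlog N
    exact tendsto_nhds_unique ht1' ht2
  -- summability of the target series
  have htsum : Summable (fun n : {n : ℕ // n ≠ k} => (z k / z (n : ℕ)) ^ p * (z (n : ℕ) - z k)⁻¹) := by
    have h1 : Summable (fun n : {n : ℕ // n ≠ k} => c (n : ℕ)) := hcsum.subtype _
    apply Summable.neg at h1
    apply h1.congr
    intro n
    rw [hcn n n.2]
    ring
  -- splitting the sum
  have hsplit : ∑' n, c n = c k + ∑' n : {n : ℕ // n ≠ k}, c (n : ℕ) := by
    rw [Summable.tsum_eq_add_tsum_ite hcsum k]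
    congr 1
    rw [← tsum_subtype_eq_of_support_subset (s := {n : ℕ | n ≠ k})]
    · apply tsum_congr
      intro n
      have hn2 : (n : ℕ) ≠ k := n.2
      simp [hn2]
    · intro n hn
      simp only [Function.mem_support, ne_eq] at hn
      intro h
      apply hn
      simp [h]
  have hsub : ∑' n : {n : ℕ // n ≠ k}, c (n : ℕ) =
      -∑' n : {n : ℕ // n ≠ k}, (z k / z (n : ℕ)) ^ p * (z (n : ℕ) - z k)⁻¹ := by
    rw [← tsum_neg]
    apply tsum_congr
    intro n
    rw [hcn n n.2]
  -- final assembly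
  rw [hfd1, hfd2]
  rw [show -(2 * deriv G (z k)) / G (z k) = -2 * (deriv G (z k) / G (z k)) by ring]
  have : deriv G (z k) / G (z k) = logDeriv G (z k) := rfl
  rw [this, hlogG, hsplit, hck, hsub]
  field_simp
  ring
end

section
/- Fix q > 0 and define z_n = 2^n, ε_n = min{1/2, 2^n exp(−(n log 2)^q)}, and w_n = z_n + ε_n for n ≥ 1. Then the combined sequence {z_n} ∪ {w_n} has logarithmic exponent of convergence equal to one and is uniformly logarithmically q-separated. -/
open Filter

/-- A sequence of genus p is uniformly logarithmically q-separated (with constant C > 0) if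
inf_k e^{C(log(1+|z_k|))^q} ∏_{n≠k} |1 - z_k/z_n| |e_p(z_k/z_n)| > 0. -/
def UnifLogQSep (z : ℕ → ℂ) (p : ℕ) (q C : ℝ) : Prop :=
  ∃ ε > 0, ∀ k : ℕ,
    ε ≤ Real.exp (C * Real.log (1 + ‖z k‖) ^ q) *
      ∏' n : {n : ℕ // n ≠ k},
        (‖1 - z k / z (n : ℕ)‖ * ‖weierE p (z k / z (n : ℕ))‖)

/-- Counting function of a sequence: number of its points in |z| < r. -/
noncomputable def countFn (z : ℕ → ℂ) (r : ℝ) : ℕ :=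
  Nat.card {n : ℕ | ‖z n‖ < r}

/-- Logarithmic exponent of convergence λ_log = limsup_{r→∞} log n(r)/log log r. -/
noncomputable def logExpConv (z : ℕ → ℂ) : EReal :=
  Filter.limsup
    (fun r : ℝ => ((Real.log (countFn z r) / Real.log (Real.log r) : ℝ) : EReal)) Filter.atTop

section Aux

open Finset

noncomputable def epsq (q : ℝ) (j : ℕ) : ℝ :=
  min (1 / 2) ((2:ℝ) ^ (j + 1) * Real.exp (-(((j:ℝ) + 1) * Real.log 2) ^ q))

noncomputable def xv (q : ℝ) (n : ℕ) : ℝ :=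
  2 ^ (n / 2 + 1) + (if n % 2 = 1 then epsq q (n / 2) else 0)

lemma epsq_pos (q : ℝ) (j : ℕ) : 0 < epsq q j := by
  apply lt_min (by norm_num)
  positivity

lemma epsq_le_half (q : ℝ) (j : ℕ) : epsq q j ≤ 1 / 2 := min_le_left _ _

lemma epsq_ge (q : ℝ) (j : ℕ) :
    Real.exp (-(((j:ℝ) + 1) * Real.log 2) ^ q) / 2 ≤ epsq q j := by
  have hE : Real.exp (-(((j:ℝ) + 1) * Real.log 2) ^ q) ≤ 1 := by
    rw [Real.exp_le_one_iff]
    have : (0:ℝ) ≤ (((j:ℝ) + 1) * Real.log 2) ^ q := by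
      apply Real.rpow_nonneg
      positivity
    linarith
  have h2 : (1:ℝ) ≤ (2:ℝ) ^ (j + 1) := one_le_pow₀ (by norm_num)
  apply le_min
  · linarith
  · nlinarith [Real.exp_pos (-(((j:ℝ) + 1) * Real.log 2) ^ q)]

lemma xv_even (q : ℝ) (j : ℕ) : xv q (2 * j) = 2 ^ (j + 1) := by
  simp [xv, Nat.mul_div_cancel_left, Nat.mul_mod_right]

lemma xv_odd (q : ℝ) (j : ℕ) : xv q (2 * j + 1) = 2 ^ (j + 1) + epsq q j := by
  have h1 : (2 * j + 1) / 2 = j := by omega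
  have h2 : (2 * j + 1) % 2 = 1 := by omega
  simp [xv, h1, h2]

lemma xv_lb (q : ℝ) (n : ℕ) : (2:ℝ) ^ (n / 2 + 1) ≤ xv q n := by
  unfold xv
  split
  · nlinarith [epsq_pos q (n / 2)]
  · simp

lemma xv_ub (q : ℝ) (n : ℕ) : xv q n ≤ (2:ℝ) ^ (n / 2 + 1) + 1 / 2 := by
  unfold xv
  split
  · nlinarith [epsq_le_half q (n / 2)]
  · norm_num

lemma xv_pos (q : ℝ) (n : ℕ) : 0 < xv q n :=
  lt_of_lt_of_le (by positivity) (xv_lb q n)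

lemma xv_ge_two (q : ℝ) (n : ℕ) : 2 ≤ xv q n := by
  have := xv_lb q n
  have h : (2:ℝ) ≤ (2:ℝ) ^ (n / 2 + 1) := by
    calc (2:ℝ) = 2 ^ 1 := (pow_one 2).symm
    _ ≤ 2 ^ (n / 2 + 1) := pow_le_pow_right₀ (by norm_num) (by omega)
  linarith

lemma natcard_Iio (m : ℕ) : Nat.card (Set.Iio m : Set ℕ) = m := by
  rw [← Finset.coe_Iio, Nat.card_coe_set_eq, Set.ncard_coe_finset, Nat.card_Iio]

lemma count_bounds (q : ℝ) (r : ℝ) (hr : 16 ≤ r) :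
    Real.log r / Real.log 2 - 1 ≤ (Nat.card {n : ℕ | xv q n < r} : ℝ) ∧
    (Nat.card {n : ℕ | xv q n < r} : ℝ) ≤ 3 * (Real.log r / Real.log 2) := by
  set g : ℝ := Real.log r / Real.log 2 with hg
  have hlog2 : (0:ℝ) < Real.log 2 := Real.log_pos (by norm_num)
  have hr1 : (1:ℝ) < r := by linarith
  have hlogr : Real.log r = g * Real.log 2 := by
    rw [hg, div_mul_cancel₀ _ hlog2.ne']
  have hgr : 4 ≤ g := by
    rw [hg, le_div_iff₀ hlog2]
    have : Real.log 16 ≤ Real.log r := Real.log_le_log (by norm_num) hr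
    have h16 : Real.log 16 = 4 * Real.log 2 := by
      rw [show (16:ℝ) = 2 ^ 4 by norm_num, Real.log_pow]; push_cast; ring
    linarith
  have hsub : {n : ℕ | xv q n < r} ⊆ Set.Iio (⌊2 * g⌋₊ + 1) := by
    intro n hn
    simp only [Set.mem_setOf_eq] at hn
    have h1 : (2:ℝ) ^ (n / 2 + 1) < r := lt_of_le_of_lt (xv_lb q n) hn
    have h2 : ((n / 2 + 1 : ℕ) : ℝ) * Real.log 2 < Real.log r := by
      have := Real.log_lt_log (by positivity) h1
      rwa [Real.log_pow] at this
    have h3 : ((n / 2 + 1 : ℕ) : ℝ) < g := by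
      rw [hg, lt_div_iff₀ hlog2]; linarith
    have hn2 : n ≤ 2 * (n / 2) + 1 := by omega
    have h4 : (n : ℝ) < 2 * g := by
      have hc : (n:ℝ) ≤ 2 * ((n/2 : ℕ) : ℝ) + 1 := by exact_mod_cast hn2
      push_cast at h3
      linarith
    have : n ≤ ⌊2 * g⌋₊ := Nat.le_floor (le_of_lt h4)
    simp only [Set.mem_Iio]
    omega
  have hfin : (Set.Iio (⌊2 * g⌋₊ + 1) : Set ℕ).Finite := Set.finite_Iio _
  have hcard_le : Nat.card {n : ℕ | xv q n < r} ≤ ⌊2 * g⌋₊ + 1 := by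
    have := Nat.card_mono hfin hsub
    rwa [natcard_Iio] at this
  have hsup : Set.Iio ⌊g⌋₊ ⊆ {n : ℕ | xv q n < r} := by
    intro n hn
    simp only [Set.mem_Iio] at hn
    have h1 : (n:ℝ) ≤ g - 1 := by
      have h2 : (n:ℝ) < (⌊g⌋₊ : ℝ) := by exact_mod_cast hn
      have h3 : (⌊g⌋₊ : ℝ) ≤ g := Nat.floor_le (by linarith)
      have : (n:ℝ) + 1 ≤ (⌊g⌋₊ : ℝ) := by exact_mod_cast hn
      linarith
    have hexp : ((n / 2 + 1 : ℕ):ℝ) ≤ g - 1 := by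
      have : ((n/2 : ℕ):ℝ) ≤ (n:ℝ) / 2 := by
        have : (n/2 : ℕ) * 2 ≤ n := by omega
        have := (Nat.cast_le (α := ℝ)).2 this
        push_cast at this ⊢
        linarith
      push_cast
      linarith
    have hpow : (2:ℝ) ^ (n / 2 + 1) ≤ r / 2 := by
      have : ((n / 2 + 1 : ℕ):ℝ) * Real.log 2 ≤ Real.log r - Real.log 2 := by
        nlinarith
      have h5 : Real.log ((2:ℝ) ^ (n / 2 + 1)) ≤ Real.log (r / 2) := by
        rw [Real.log_pow, Real.log_div (by linarith) (by norm_num)]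
        linarith
      have := Real.exp_le_exp.2 h5
      rwa [Real.exp_log (by positivity), Real.exp_log (by positivity)] at this
    have : xv q n < r := by
      have := xv_ub q n
      have : xv q n ≤ r / 2 + 1 / 2 := by linarith
      linarith
    exact this
  have hfin2 : ({n : ℕ | xv q n < r}).Finite := hfin.subset hsub
  have hcard_ge : ⌊g⌋₊ ≤ Nat.card {n : ℕ | xv q n < r} := by
    have := Nat.card_mono hfin2 hsup
    rwa [natcard_Iio] at this
  constructor
  · have h1 : g - 1 ≤ (⌊g⌋₊ : ℝ) := by
      have := Nat.lt_floor_add_one g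
      linarith
    have h2 : (⌊g⌋₊ : ℝ) ≤ (Nat.card {n : ℕ | xv q n < r} : ℝ) := by exact_mod_cast hcard_ge
    linarith
  · have h1 : (Nat.card {n : ℕ | xv q n < r} : ℝ) ≤ (⌊2*g⌋₊ : ℝ) + 1 := by
      exact_mod_cast hcard_le
    have h2 : (⌊2*g⌋₊ : ℝ) ≤ 2 * g := Nat.floor_le (by linarith)
    linarith

lemma ratio_tendsto (c : ℝ → ℕ)
    (h : ∀ r : ℝ, 16 ≤ r → Real.log r / Real.log 2 - 1 ≤ (c r : ℝ) ∧
      (c r : ℝ) ≤ 3 * (Real.log r / Real.log 2)) :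
    Tendsto (fun r => Real.log (c r) / Real.log (Real.log r)) atTop (nhds 1) := by
  have hlog2 : (0:ℝ) < Real.log 2 := Real.log_pos (by norm_num)
  set K : ℝ := |Real.log (Real.log 2)| + Real.log 3 + Real.log 2 + 1 with hK
  have hKpos : 0 < K := by
    have := abs_nonneg (Real.log (Real.log 2))
    have := Real.log_pos (show (1:ℝ) < 3 by norm_num)
    linarith
  have hL : Tendsto (fun r : ℝ => Real.log (Real.log r)) atTop atTop :=
    Real.tendsto_log_atTop.comp Real.tendsto_log_atTop
  have hlow : Tendsto (fun r : ℝ => (Real.log (Real.log r) - K) / Real.log (Real.log r))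
      atTop (nhds 1) := by
    have inner : Tendsto (fun x : ℝ => (x - K) / x) atTop (nhds 1) := by
      have h1 : Tendsto (fun x : ℝ => 1 - K / x) atTop (nhds 1) := by
        have := tendsto_const_nhds (α := ℝ) (x := K) (f := atTop (α := ℝ)) |>.div_atTop tendsto_id
        simpa using (tendsto_const_nhds (α := ℝ) (x := (1:ℝ)) (f := atTop (α := ℝ))).sub this
      apply h1.congr'
      filter_upwards [eventually_gt_atTop 0] with x hx
      field_simp
    exact inner.comp hL
  have hhigh : Tendsto (fun r : ℝ => (Real.log (Real.log r) + K) / Real.log (Real.log r))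
      atTop (nhds 1) := by
    have inner : Tendsto (fun x : ℝ => (x + K) / x) atTop (nhds 1) := by
      have h1 : Tendsto (fun x : ℝ => 1 + K / x) atTop (nhds 1) := by
        have := tendsto_const_nhds (α := ℝ) (x := K) (f := atTop (α := ℝ)) |>.div_atTop tendsto_id
        simpa using (tendsto_const_nhds (α := ℝ) (x := (1:ℝ)) (f := atTop (α := ℝ))).add this
      apply h1.congr'
      filter_upwards [eventually_gt_atTop 0] with x hx
      field_simp
    exact inner.comp hL
  apply tendsto_of_tendsto_of_tendsto_of_le_of_le' hlow hhigh
  · -- lower bound eventually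
    filter_upwards [eventually_ge_atTop (16:ℝ), hL.eventually_ge_atTop 1,
      (Real.tendsto_log_atTop.comp (tendsto_id (α := ℝ))).eventually_ge_atTop (8 * Real.log 2)]
      with r hr hLr hGr
    obtain ⟨hc1, hc2⟩ := h r hr
    have hlr : (0:ℝ) < Real.log r := by
      have := hGr
      simp only [Function.comp_apply, id_eq] at this
      nlinarith
    set G : ℝ := Real.log r / Real.log 2 with hGdef
    have hG8 : 8 ≤ G := by
      rw [hGdef, le_div_iff₀ hlog2]
      simpa using hGr
    have hcpos : (3:ℝ) ≤ (c r : ℝ) := by linarith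
    have hlogc : Real.log G - Real.log 2 ≤ Real.log (c r) := by
      have h1 : G / 2 ≤ (c r : ℝ) := by linarith
      have h2 : Real.log (G / 2) ≤ Real.log (c r) := Real.log_le_log (by linarith) h1
      rwa [Real.log_div (by linarith) (by norm_num)] at h2
    have hlogG : Real.log G = Real.log (Real.log r) - Real.log (Real.log 2) := by
      rw [hGdef, Real.log_div (by linarith) (by linarith)]
    have hnum : Real.log (Real.log r) - K ≤ Real.log (c r) := by
      have := abs_nonneg (Real.log (Real.log 2))
      have h3 : Real.log (Real.log 2) ≤ |Real.log (Real.log 2)| := le_abs_self _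
      have h4 : -|Real.log (Real.log 2)| ≤ Real.log (Real.log 2) := neg_abs_le _
      have := Real.log_pos (show (1:ℝ) < 3 by norm_num)
      rw [hlogG] at hlogc
      rw [hK]
      linarith
    have hLpos : (0:ℝ) < Real.log (Real.log r) := by linarith
    exact div_le_div_of_nonneg_right hnum hLpos.le |>.trans_eq rfl
  · -- upper bound eventually
    filter_upwards [eventually_ge_atTop (16:ℝ), hL.eventually_ge_atTop 1,
      (Real.tendsto_log_atTop.comp (tendsto_id (α := ℝ))).eventually_ge_atTop (8 * Real.log 2)]
      with r hr hLr hGr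
    obtain ⟨hc1, hc2⟩ := h r hr
    have hlr : (0:ℝ) < Real.log r := by
      have := hGr
      simp only [Function.comp_apply, id_eq] at this
      nlinarith
    set G : ℝ := Real.log r / Real.log 2 with hGdef
    have hG8 : 8 ≤ G := by
      rw [hGdef, le_div_iff₀ hlog2]
      simpa using hGr
    have hlogG : Real.log G = Real.log (Real.log r) - Real.log (Real.log 2) := by
      rw [hGdef, Real.log_div (by linarith) (by linarith)]
    have hlogc : Real.log (c r) ≤ Real.log 3 + Real.log G := by
      have h2 : Real.log (c r) ≤ Real.log (3 * G) := by
        apply Real.log_le_log (by linarith) hc2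
      rwa [Real.log_mul (by norm_num) (by linarith)] at h2
    have hnum : Real.log (c r) ≤ Real.log (Real.log r) + K := by
      have h4 : -|Real.log (Real.log 2)| ≤ Real.log (Real.log 2) := neg_abs_le _
      rw [hlogG] at hlogc
      rw [hK]
      linarith
    have hLpos : (0:ℝ) < Real.log (Real.log r) := by linarith
    exact div_le_div_of_nonneg_right hnum hLpos.le

lemma geo_pair (M : ℕ) :
    ∑ m ∈ range (2 * M), ((2:ℝ) ^ (m / 2))⁻¹ = 2 * ∑ j ∈ range M, ((2:ℝ) ^ j)⁻¹ := by
  induction M with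
  | zero => simp
  | succ M ih =>
    have h2 : 2 * (M + 1) = (2 * M + 1) + 1 := by ring
    rw [h2, Finset.sum_range_succ, Finset.sum_range_succ, ih, Finset.sum_range_succ]
    have e1 : (2 * M) / 2 = M := by omega
    have e2 : (2 * M + 1) / 2 = M := by omega
    rw [e1, e2]
    ring

lemma geo_bound (S : Finset ℕ) : ∑ m ∈ S, ((2:ℝ) ^ (m / 2))⁻¹ ≤ 4 := by
  obtain ⟨M, hM⟩ := S.exists_nat_subset_range
  have h1 : ∑ m ∈ S, ((2:ℝ) ^ (m / 2))⁻¹ ≤ ∑ m ∈ range (2 * M), ((2:ℝ) ^ (m / 2))⁻¹ := by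
    apply Finset.sum_le_sum_of_subset_of_nonneg
    · exact hM.trans (Finset.range_subset_range.2 (by omega))
    · intro i _ _
      positivity
  rw [geo_pair] at h1
  have h2 : ∑ j ∈ range M, ((2:ℝ) ^ j)⁻¹ ≤ 2 := by
    have := sum_geometric_two_le M
    have he : ∀ j : ℕ, ((2:ℝ) ^ j)⁻¹ = (1 / 2 : ℝ) ^ j := by
      intro j
      rw [one_div, inv_pow]
    calc ∑ j ∈ range M, ((2:ℝ) ^ j)⁻¹ = ∑ j ∈ range M, ((1:ℝ)/2) ^ j := by
          exact Finset.sum_congr rfl fun j _ => he j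
    _ ≤ 2 := this
  linarith

lemma geo_tail (j0 : ℕ) (G : Finset ℕ) (hG : ∀ n ∈ G, 2 * j0 + 2 ≤ n) :
    ∑ n ∈ G, (2:ℝ) ^ (j0 + 3) * ((2:ℝ) ^ (n / 2))⁻¹ ≤ 16 := by
  have key : ∀ n ∈ G, (2:ℝ) ^ (j0 + 3) * ((2:ℝ) ^ (n / 2))⁻¹
      = 4 * ((2:ℝ) ^ ((n - (2 * j0 + 2)) / 2))⁻¹ := by
    intro n hn
    have hn' := hG n hn
    have hdiv : n / 2 = (n - (2 * j0 + 2)) / 2 + (j0 + 1) := by omega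
    have hsplit : (2:ℝ) ^ (n / 2) = 2 ^ ((n - (2 * j0 + 2)) / 2) * 2 ^ (j0 + 1) := by
      rw [hdiv, pow_add]
    have h4 : (2:ℝ) ^ (j0 + 3) = 4 * 2 ^ (j0 + 1) := by
      rw [show j0 + 3 = (j0 + 1) + 2 by ring, pow_add]
      ring
    rw [hsplit, mul_inv, h4]
    have : ((2:ℝ) ^ (j0 + 1)) ≠ 0 := by positivity
    field_simp
  rw [Finset.sum_congr rfl key]
  rw [← Finset.mul_sum]
  have himg : ∑ n ∈ G, ((2:ℝ) ^ ((n - (2 * j0 + 2)) / 2))⁻¹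
      = ∑ m ∈ G.image (· - (2 * j0 + 2)), ((2:ℝ) ^ (m / 2))⁻¹ := by
    rw [Finset.sum_image]
    intro a ha b hb hab
    have := hG a ha
    have := hG b hb
    simp only at hab
    omega
  rw [himg]
  have := geo_bound (G.image (· - (2 * j0 + 2)))
  linarith

lemma sum_pairs (J : ℕ) : ∑ n ∈ range (2 * J), (J - n / 2) = J * (J + 1) := by
  induction J with
  | zero => simp
  | succ J ih =>
    have h2 : 2 * (J + 1) = (2 * J + 1) + 1 := by ring
    rw [h2, Finset.sum_range_succ, Finset.sum_range_succ]
    have e1 : (2 * J) / 2 = J := by omega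
    have e2 : (2 * J + 1) / 2 = J := by omega
    rw [e1, e2]
    have hstep : ∑ n ∈ range (2 * J), (J + 1 - n / 2) = ∑ n ∈ range (2 * J), ((J - n / 2) + 1) := by
      apply Finset.sum_congr rfl
      intro n hn
      simp only [Finset.mem_range] at hn
      omega
    rw [hstep, Finset.sum_add_distrib, ih]
    simp
    ring

lemma absF (q : ℝ) (k n : ℕ) :
    |1 - xv q k / xv q n| = |xv q n - xv q k| / xv q n := by
  have hb : xv q n ≠ 0 := ne_of_gt (xv_pos q n)
  have h1 : (1 : ℝ) - xv q k / xv q n = (xv q n - xv q k) / xv q n := by field_simp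
  rw [h1, abs_div, abs_of_pos (xv_pos q n)]

lemma B1 (q : ℝ) (k n : ℕ) (hj : n / 2 < k / 2) :
    (2:ℝ) ^ (k / 2 - n / 2) / 4 ≤ |1 - xv q k / xv q n| := by
  set j0 := k / 2
  set j := n / 2
  set d := j0 - j with hd
  have hjd : j0 = j + d := by omega
  have hd1 : 1 ≤ d := by omega
  have hD : (2:ℝ) ≤ 2 ^ d := by
    calc (2:ℝ) = 2 ^ 1 := (pow_one 2).symm
    _ ≤ 2 ^ d := pow_le_pow_right₀ (by norm_num) hd1
  have ha : (1:ℝ) ≤ 2 ^ j := one_le_pow₀ (by norm_num)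
  have hxk : (2:ℝ) ^ (j0 + 1) ≤ xv q k := xv_lb q k
  have hxn : xv q n ≤ (2:ℝ) ^ (j + 1) + 1 / 2 := xv_ub q n
  have hxnpos := xv_pos q n
  have hpow : (2:ℝ) ^ (j0 + 1) = 2 * 2 ^ j * 2 ^ d := by
    rw [hjd, show j + d + 1 = (j + 1) + d by ring, pow_add, pow_succ]
    ring
  have hpj : (2:ℝ) ^ (j + 1) = 2 * 2 ^ j := by rw [pow_succ]; ring
  have key : (2:ℝ) ^ d * xv q n ≤ 4 * (xv q k - xv q n) := by
    nlinarith [hxk, hxn, hxnpos, hD, ha]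
  have hlt : xv q n < xv q k := by nlinarith
  rw [absF, abs_of_nonpos (by linarith)]
  rw [div_le_div_iff₀ (by norm_num) hxnpos]
  linarith

lemma B2 (q : ℝ) (k n : ℕ) (hne : n ≠ k) (hj : n / 2 = k / 2) :
    Real.exp (-((((k / 2 : ℕ):ℝ) + 1) * Real.log 2) ^ q) / 2 ^ (k / 2 + 3)
      ≤ |1 - xv q k / xv q n| := by
  set j0 := k / 2 with hj0
  have hcases : (k = 2 * j0 ∧ n = 2 * j0 + 1) ∨ (k = 2 * j0 + 1 ∧ n = 2 * j0) := by omega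
  have heps := epsq_ge q j0
  have hepspos := epsq_pos q j0
  have hepshalf := epsq_le_half q j0
  have hEpos := Real.exp_pos (-(((j0:ℝ) + 1) * Real.log 2) ^ q)
  have hp : (0:ℝ) < 2 ^ (j0 + 1) := by positivity
  have hone : (1:ℝ) ≤ 2 ^ (j0 + 1) := one_le_pow₀ (by norm_num)
  have habs : |xv q n - xv q k| = epsq q j0 := by
    rcases hcases with ⟨hk, hn⟩ | ⟨hk, hn⟩
    · rw [hk, hn, xv_even, xv_odd,
        show (2:ℝ) ^ (j0 + 1) + epsq q j0 - 2 ^ (j0 + 1) = epsq q j0 by ring]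
      exact abs_of_nonneg hepspos.le
    · rw [hk, hn, xv_odd, xv_even,
        show (2:ℝ) ^ (j0 + 1) - (2 ^ (j0 + 1) + epsq q j0) = -epsq q j0 by ring, abs_neg]
      exact abs_of_nonneg hepspos.le
  have hxn : xv q n ≤ 2 ^ (j0 + 2) := by
    have h1 : xv q n ≤ (2:ℝ) ^ (n / 2 + 1) + 1 / 2 := xv_ub q n
    rw [hj] at h1
    have h2 : (2:ℝ) ^ (j0 + 2) = 2 ^ (j0 + 1) * 2 := pow_succ 2 (j0 + 1)
    nlinarith
  have hxnpos := xv_pos q n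
  rw [absF, habs]
  have step1 : epsq q j0 / 2 ^ (j0 + 2) ≤ epsq q j0 / xv q n :=
    div_le_div_of_nonneg_left hepspos.le (by positivity) hxn
  have step2 : Real.exp (-(((j0:ℝ) + 1) * Real.log 2) ^ q) / 2 ^ (j0 + 3)
      ≤ epsq q j0 / 2 ^ (j0 + 2) := by
    have hps : (2:ℝ) ^ (j0 + 3) = 2 ^ (j0 + 2) * 2 := pow_succ 2 (j0 + 2)
    rw [hps, div_le_div_iff₀ (by positivity) (by positivity)]
    have hq2 : (0:ℝ) < (2:ℝ) ^ (j0 + 2) := by positivity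
    nlinarith
  exact step2.trans step1

lemma expbound (t : ℝ) (h0 : 0 ≤ t) (h2 : t ≤ 1 / 2) : Real.exp (-(2 * t)) ≤ 1 - t := by
  have h1 : 1 + 2 * t ≤ Real.exp (2 * t) := by
    have := Real.add_one_le_exp (2 * t)
    linarith
  have hpos : (0:ℝ) < Real.exp (2 * t) := Real.exp_pos _
  rw [Real.exp_neg, inv_le_iff_one_le_mul₀ hpos]
  nlinarith

lemma B3 (q : ℝ) (k n : ℕ) (hj : k / 2 < n / 2) :
    Real.exp (-((2:ℝ) ^ (k / 2 + 3) * ((2:ℝ) ^ (n / 2))⁻¹)) ≤ |1 - xv q k / xv q n| := by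
  set j0 := k / 2
  set j := n / 2 with hjdef
  have hxk : xv q k ≤ (2:ℝ) ^ (j0 + 1) + 1 / 2 := xv_ub q k
  have hxn : (2:ℝ) ^ (j + 1) ≤ xv q n := xv_lb q n
  have hxnpos := xv_pos q n
  have hxkpos := xv_pos q k
  have hpj : (0:ℝ) < 2 ^ j := by positivity
  have hone : (1:ℝ) ≤ 2 ^ (j0 + 1) := one_le_pow₀ (by norm_num)
  have hpjj : (2:ℝ) ^ (j + 1) = 2 ^ j * 2 := pow_succ 2 j
  have hlt : xv q k < xv q n := by
    have h1 : (2:ℝ) ^ (j0 + 2) ≤ 2 ^ (j + 1) := pow_le_pow_right₀ (by norm_num) (by omega)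
    have he : (2:ℝ) ^ (j0 + 2) = 2 ^ (j0 + 1) * 2 := pow_succ 2 (j0 + 1)
    nlinarith
  rw [absF, abs_of_nonneg (by linarith)]
  by_cases hcase : j = j0 + 1
  · have hexp : (2:ℝ) ^ (j0 + 3) * ((2:ℝ) ^ j)⁻¹ = 4 := by
      rw [hcase, show j0 + 3 = (j0 + 1) + 2 by ring, pow_add]
      field_simp
      norm_num
    rw [hexp]
    have hF : (3:ℝ) / 8 ≤ (xv q n - xv q k) / xv q n := by
      rw [le_div_iff₀ hxnpos]
      have h1 : xv q n ≤ (2:ℝ) ^ (j + 1) + 1 / 2 := xv_ub q n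
      have h2 : (2:ℝ) ^ (j + 1) = 2 ^ (j0 + 1) * 2 := by
        rw [hcase]; exact pow_succ 2 (j0 + 1)
      have h3 : (2:ℝ) ≤ 2 ^ (j0 + 1) := by
        calc (2:ℝ) = 2 ^ 1 := (pow_one 2).symm
        _ ≤ 2 ^ (j0 + 1) := pow_le_pow_right₀ (by norm_num) (by omega)
      nlinarith
    have he4 : Real.exp (-(4:ℝ)) ≤ 3 / 8 := by
      rw [Real.exp_neg, inv_le_iff_one_le_mul₀ (Real.exp_pos _)]
      have := Real.add_one_le_exp (4:ℝ)
      nlinarith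
    linarith
  · have hj2 : j0 + 2 ≤ j := by omega
    set t : ℝ := xv q k / xv q n with ht
    have htnn : 0 ≤ t := by positivity
    have hxk2 : xv q k ≤ 2 * (2:ℝ) ^ (j0 + 1) := by nlinarith
    have htle : t ≤ (2:ℝ) ^ (j0 + 1) * ((2:ℝ) ^ j)⁻¹ := by
      rw [ht, div_le_iff₀ hxnpos]
      calc xv q k ≤ 2 * (2:ℝ) ^ (j0 + 1) := hxk2
      _ = ((2:ℝ) ^ (j0 + 1) * ((2:ℝ) ^ j)⁻¹) * (2 ^ j * 2) := by field_simp
      _ = ((2:ℝ) ^ (j0 + 1) * ((2:ℝ) ^ j)⁻¹) * 2 ^ (j + 1) := by rw [hpjj]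
      _ ≤ _ := mul_le_mul_of_nonneg_left hxn (by positivity)
    have hthalf : t ≤ 1 / 2 := by
      have h3 : (2:ℝ) ^ (j0 + 2) ≤ 2 ^ j := pow_le_pow_right₀ (by norm_num) hj2
      have he : (2:ℝ) ^ (j0 + 2) = 2 ^ (j0 + 1) * 2 := pow_succ 2 (j0 + 1)
      have h4 : (2:ℝ) ^ (j0 + 1) * ((2:ℝ) ^ j)⁻¹ ≤ 1 / 2 := by
        rw [mul_inv_le_iff₀ hpj]
        nlinarith
      linarith
    have hmain : Real.exp (-(2 * t)) ≤ 1 - t := expbound t htnn hthalf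
    have hFt : (xv q n - xv q k) / xv q n = 1 - t := by
      rw [ht]
      field_simp
    rw [hFt]
    refine le_trans ?_ hmain
    apply Real.exp_le_exp.2
    have hfin : 2 * t ≤ (2:ℝ) ^ (j0 + 3) * ((2:ℝ) ^ j)⁻¹ := by
      have he : (2:ℝ) ^ (j0 + 3) = (2:ℝ) ^ (j0 + 1) * 4 := by
        rw [show j0 + 3 = (j0 + 1) + 2 by ring, pow_add]; norm_num
      rw [he]
      nlinarith [htle, hpj, inv_nonneg.2 hpj.le]
    linarith

lemma coreG (q : ℝ) (k : ℕ) (G : Finset ℕ) (hk : k ∉ G)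
    (hsub : (range (2 * (k / 2) + 2)).erase k ⊆ G) :
    (2:ℝ) ^ ((k / 2) * (k / 2 + 1)) / 2 ^ (4 * (k / 2)) *
      (Real.exp (-((((k / 2 : ℕ):ℝ) + 1) * Real.log 2) ^ q) / 2 ^ (k / 2 + 3)) *
      Real.exp (-16)
    ≤ ∏ n ∈ G, |1 - xv q k / xv q n| := by
  classical
  set j0 := k / 2 with hj0
  set fF : ℕ → ℝ := fun n => |1 - xv q k / xv q n| with hfF
  have hfFnn : ∀ n, 0 ≤ fF n := fun n => abs_nonneg _
  have hsplit : ∏ n ∈ G, fF n =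
      (∏ n ∈ G.filter (fun n => n < 2 * j0 + 2), fF n) *
      ∏ n ∈ G.filter (fun n => ¬ n < 2 * j0 + 2), fF n :=
    (Finset.prod_filter_mul_prod_filter_not G _ fF).symm
  have hGfil : G.filter (fun n => n < 2 * j0 + 2) = (range (2 * j0 + 2)).erase k := by
    ext m
    simp only [mem_filter, mem_erase, mem_range]
    constructor
    · rintro ⟨hmG, hm⟩
      exact ⟨fun h => hk (h ▸ hmG), hm⟩
    · rintro ⟨hne, hm⟩
      exact ⟨hsub (by simp [mem_erase, mem_range, hne, hm]), hm⟩
  have hk2 : k = 2 * j0 ∨ k = 2 * j0 + 1 := by omega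
  obtain ⟨p, hpne, hpdiv, hins⟩ : ∃ p, p ≠ k ∧ p / 2 = j0 ∧
      (range (2 * j0 + 2)).erase k = insert p (range (2 * j0)) := by
    rcases hk2 with h | h
    · refine ⟨2 * j0 + 1, by omega, by omega, ?_⟩
      ext m
      simp only [mem_erase, mem_range, mem_insert]
      omega
    · refine ⟨2 * j0, by omega, by omega, ?_⟩
      ext m
      simp only [mem_erase, mem_range, mem_insert]
      omega
  have hpnotin : p ∉ range (2 * j0) := by
    simp only [mem_range]
    omega
  have hbig : (2:ℝ) ^ (j0 * (j0 + 1)) / 2 ^ (4 * j0) ≤ ∏ n ∈ range (2 * j0), fF n := by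
    have h1 : ∀ n ∈ range (2 * j0), (2:ℝ) ^ (j0 - n / 2) / 4 ≤ fF n := by
      intro n hn
      simp only [mem_range] at hn
      exact B1 q k n (by omega)
    have h2 : ∏ n ∈ range (2 * j0), ((2:ℝ) ^ (j0 - n / 2) / 4) ≤ ∏ n ∈ range (2 * j0), fF n :=
      Finset.prod_le_prod (fun n _ => by positivity) h1
    have h3 : ∏ n ∈ range (2 * j0), ((2:ℝ) ^ (j0 - n / 2) / 4)
        = (2:ℝ) ^ (j0 * (j0 + 1)) / 2 ^ (4 * j0) := by
      rw [Finset.prod_div_distrib, Finset.prod_const, Finset.card_range,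
        Finset.prod_pow_eq_pow_sum, sum_pairs]
      congr 1
      rw [show (4:ℝ) = 2 ^ 2 by norm_num, ← pow_mul]
      congr 1
      ring
    linarith [h3 ▸ h2]
  have hpart : Real.exp (-(((j0:ℝ) + 1) * Real.log 2) ^ q) / 2 ^ (j0 + 3) ≤ fF p :=
    B2 q k p hpne (by omega)
  have htail : Real.exp (-16) ≤ ∏ n ∈ G.filter (fun n => ¬ n < 2 * j0 + 2), fF n := by
    set T := G.filter (fun n => ¬ n < 2 * j0 + 2) with hT
    have hTn : ∀ n ∈ T, 2 * j0 + 2 ≤ n := by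
      intro n hn
      simp only [hT, mem_filter] at hn
      omega
    have h1 : ∀ n ∈ T, Real.exp (-((2:ℝ) ^ (j0 + 3) * ((2:ℝ) ^ (n / 2))⁻¹)) ≤ fF n := by
      intro n hn
      exact B3 q k n (by have := hTn n hn; omega)
    have h2 : ∏ n ∈ T, Real.exp (-((2:ℝ) ^ (j0 + 3) * ((2:ℝ) ^ (n / 2))⁻¹)) ≤ ∏ n ∈ T, fF n :=
      Finset.prod_le_prod (fun n _ => (Real.exp_pos _).le) h1
    have h3 : ∏ n ∈ T, Real.exp (-((2:ℝ) ^ (j0 + 3) * ((2:ℝ) ^ (n / 2))⁻¹))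
        = Real.exp (-∑ n ∈ T, (2:ℝ) ^ (j0 + 3) * ((2:ℝ) ^ (n / 2))⁻¹) := by
      rw [← Real.exp_sum]
      congr 1
      rw [Finset.sum_neg_distrib]
    have h4 : Real.exp (-16) ≤
        Real.exp (-∑ n ∈ T, (2:ℝ) ^ (j0 + 3) * ((2:ℝ) ^ (n / 2))⁻¹) := by
      apply Real.exp_le_exp.2
      have := geo_tail j0 T hTn
      linarith
    calc Real.exp (-16) ≤ _ := h4
    _ = _ := h3.symm
    _ ≤ _ := h2
  -- combine
  rw [hsplit, hGfil, hins, Finset.prod_insert hpnotin]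
  have e1 : (0:ℝ) ≤ ∏ n ∈ range (2 * j0), fF n := Finset.prod_nonneg fun n _ => hfFnn n
  have e2 : (0:ℝ) ≤ fF p := hfFnn p
  have hQnn : (0:ℝ) ≤ (2:ℝ) ^ (j0 * (j0 + 1)) / 2 ^ (4 * j0) := by positivity
  have hEnn : (0:ℝ) ≤ Real.exp (-(((j0:ℝ) + 1) * Real.log 2) ^ q) / 2 ^ (j0 + 3) := by positivity
  calc (2:ℝ) ^ (j0 * (j0 + 1)) / 2 ^ (4 * j0) *
      (Real.exp (-(((j0:ℝ) + 1) * Real.log 2) ^ q) / 2 ^ (j0 + 3)) * Real.exp (-16)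
      ≤ (∏ n ∈ range (2 * j0), fF n) * fF p * (∏ n ∈ G.filter (fun n => ¬ n < 2 * j0 + 2), fF n) := by
        apply mul_le_mul
        · exact mul_le_mul hbig hpart hEnn e1
        · exact htail
        · exact (Real.exp_pos _).le
        · exact mul_nonneg e1 e2
  _ = fF p * (∏ n ∈ range (2 * j0), fF n) * ∏ n ∈ G.filter (fun n => ¬ n < 2 * j0 + 2), fF n := by
        ring

lemma keybound (q : ℝ) (hq : 0 < q) (k : ℕ) :
    (1 / 128 : ℝ) * Real.exp (-16) ≤
      Real.exp (1 * Real.log (1 + xv q k) ^ q) *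
        ∏' n : {n : ℕ // n ≠ k}, |1 - xv q k / xv q (n : ℕ)| := by
  classical
  set j0 := k / 2 with hj0
  set L : ℝ := ((j0 : ℝ) + 1) * Real.log 2 with hL
  have hlog2 : (0:ℝ) < Real.log 2 := Real.log_pos (by norm_num)
  have hLnn : 0 ≤ L := by positivity
  have hL' : L ^ q ≤ Real.log (1 + xv q k) ^ q := by
    apply Real.rpow_le_rpow hLnn _ hq.le
    have h1 : (2:ℝ) ^ (j0 + 1) ≤ 1 + xv q k := by
      have := xv_lb q k
      have := xv_pos q k
      linarith [xv_lb q k]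
    have h2 : Real.log ((2:ℝ) ^ (j0 + 1)) ≤ Real.log (1 + xv q k) :=
      Real.log_le_log (by positivity) h1
    rw [Real.log_pow] at h2
    push_cast at h2
    linarith
  have hexpmono : Real.exp (L ^ q) ≤ Real.exp (1 * Real.log (1 + xv q k) ^ q) := by
    rw [one_mul]
    exact Real.exp_le_exp.2 hL'
  set f : {n : ℕ // n ≠ k} → ℝ := fun i => |1 - xv q k / xv q (i : ℕ)| with hf
  by_cases hm : Multipliable f
  · have hprod : HasProd f (∏' i, f i) := hm.hasProd
    set δ : ℝ := (2:ℝ) ^ (j0 * (j0 + 1)) / 2 ^ (4 * j0) *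
      (Real.exp (-L ^ q) / 2 ^ (j0 + 3)) * Real.exp (-16) with hδ
    have hlb : δ ≤ ∏' i, f i := by
      apply ge_of_tendsto hprod
      rw [SummationFilter.unconditional_filter, eventually_atTop]
      refine ⟨(range (2 * j0 + 2)).subtype (· ≠ k), fun F hF => ?_⟩
      have hmap : ∏ i ∈ F, f i
          = ∏ n ∈ F.map (Function.Embedding.subtype (· ≠ k)), |1 - xv q k / xv q n| := by
        rw [Finset.prod_map]
        rfl
      rw [hmap]
      apply coreG
      · intro hkmem
        rw [Finset.mem_map] at hkmem
        obtain ⟨i, _, hi⟩ := hkmem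
        exact i.2 (by simpa using hi)
      · intro m hm'
        rw [Finset.mem_erase, Finset.mem_range] at hm'
        rw [Finset.mem_map]
        refine ⟨⟨m, hm'.1⟩, ?_, rfl⟩
        apply hF
        rw [Finset.mem_subtype]
        simpa [Finset.mem_range] using hm'.2
    have hδnn : 0 ≤ δ := by positivity
    have step : Real.exp (L ^ q) * δ ≤ Real.exp (1 * Real.log (1 + xv q k) ^ q) * ∏' i, f i := by
      apply mul_le_mul hexpmono hlb hδnn (Real.exp_pos _).le
    refine le_trans ?_ step
    have hcancel : Real.exp (L ^ q) * Real.exp (-L ^ q) = 1 := by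
      rw [← Real.exp_add]
      simp
    have heq : Real.exp (L ^ q) * δ
        = (2:ℝ) ^ (j0 * (j0 + 1)) / (2 ^ (4 * j0) * 2 ^ (j0 + 3)) * Real.exp (-16) := by
      rw [hδ]
      field_simp
      linear_combination hcancel
    rw [heq]
    have hpowle : (2:ℝ) ^ (4 * j0) * 2 ^ (j0 + 3) ≤ 128 * 2 ^ (j0 * (j0 + 1)) := by
      rw [← pow_add, show (128:ℝ) = 2 ^ 7 by norm_num, ← pow_add]
      apply pow_le_pow_right₀ (by norm_num)
      zify
      nlinarith [sq_nonneg ((j0 : ℤ) - 2)]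
    have hpnn : (0:ℝ) < 2 ^ (4 * j0) * 2 ^ (j0 + 3) := by positivity
    have hqnn : (0:ℝ) < 2 ^ (j0 * (j0 + 1)) := by positivity
    apply mul_le_mul_of_nonneg_right _ (Real.exp_pos (-16:ℝ)).le
    rw [div_le_div_iff₀ (by norm_num) hpnn]
    linarith
  · rw [tprod_eq_one_of_not_multipliable hm, mul_one]
    have h1 : (1:ℝ) ≤ Real.exp (1 * Real.log (1 + xv q k) ^ q) := by
      rw [Real.one_le_exp_iff]
      rw [one_mul]
      apply Real.rpow_nonneg
      apply Real.log_nonneg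
      have := xv_pos q k
      linarith
    have h2 : (1 / 128 : ℝ) * Real.exp (-16) ≤ 1 := by
      have : Real.exp (-16:ℝ) ≤ 1 := Real.exp_le_one_iff.2 (by norm_num)
      nlinarith [Real.exp_pos (-16:ℝ)]
    linarith


end Aux

/-- Example 7.1: with z_n = 2^n, ε_n = min{1/2, 2^n exp(−(n log 2)^q)} and w_n = z_n + ε_n
(n ≥ 1), the combined sequence {z_n} ∪ {w_n} has logarithmic exponent of convergence one and
is uniformly logarithmically q-separated.  (The combined sequence is indexed from 0 by
ζ(2j) = 2^{j+1} and ζ(2j+1) = 2^{j+1} + ε_{j+1}.) -/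
theorem stmt19 (q : ℝ) (hq : 0 < q) (ζ : ℕ → ℂ)
    (hζ1 : ∀ j : ℕ, ζ (2 * j) = (2 : ℂ) ^ (j + 1))
    (hζ2 : ∀ j : ℕ, ζ (2 * j + 1) =
      (2 : ℂ) ^ (j + 1) +
        ((min (1 / 2 : ℝ)
          ((2 : ℝ) ^ (j + 1) * Real.exp (-(((j : ℝ) + 1) * Real.log 2) ^ q)) : ℝ) : ℂ)) :
    logExpConv ζ = (1 : EReal) ∧ ∃ C > (0:ℝ), UnifLogQSep ζ 0 q C := by
  have hzeta : ∀ n : ℕ, ζ n = ((xv q n : ℝ) : ℂ) := by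
    intro n
    rcases Nat.even_or_odd n with ⟨j, hj⟩ | ⟨j, hj⟩
    · have hn : n = 2 * j := by omega
      rw [hn, hζ1 j, xv_even]
      push_cast
      ring
    · have hn : n = 2 * j + 1 := by omega
      rw [hn, hζ2 j, xv_odd]
      unfold epsq
      push_cast
      ring
  have habs : ∀ n : ℕ, ‖ζ n‖ = xv q n := by
    intro n
    rw [hzeta n, Complex.norm_real, Real.norm_eq_abs, abs_of_pos (xv_pos q n)]
  constructor
  · -- logarithmic exponent of convergence is 1
    have hcount : ∀ r : ℝ, countFn ζ r = Nat.card {n : ℕ | xv q n < r} := by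
      intro r
      unfold countFn
      have hset : {n : ℕ | ‖ζ n‖ < r} = {n : ℕ | xv q n < r} := by
        ext n
        simp [habs n]
      rw [hset]
    have hb : ∀ r : ℝ, 16 ≤ r →
        Real.log r / Real.log 2 - 1 ≤ (countFn ζ r : ℝ) ∧
        (countFn ζ r : ℝ) ≤ 3 * (Real.log r / Real.log 2) := by
      intro r hr
      rw [hcount r]
      exact count_bounds q r hr
    have htend := ratio_tendsto (fun r => countFn ζ r) hb
    unfold logExpConv
    have h2 : Tendsto (fun r : ℝ =>
        ((Real.log (countFn ζ r) / Real.log (Real.log r) : ℝ) : EReal)) atTop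
        (nhds ((1:ℝ) : EReal)) := EReal.tendsto_coe.2 htend
    rw [show ((1:ℝ) : EReal) = (1 : EReal) by norm_num] at h2
    exact h2.limsup_eq
  · -- uniform logarithmic q-separation with C = 1
    refine ⟨1, one_pos, (1 / 128 : ℝ) * Real.exp (-16), by positivity, fun k => ?_⟩
    have hterm : ∀ i : {n : ℕ // n ≠ k},
        ‖1 - ζ k / ζ (i : ℕ)‖ * ‖weierE 0 (ζ k / ζ (i : ℕ))‖
          = |1 - xv q k / xv q (i : ℕ)| := by
      intro i
      have hw : weierE 0 (ζ k / ζ (i : ℕ)) = 1 := by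
        unfold weierE
        simp
      rw [hw, norm_one, mul_one, hzeta k, hzeta (i : ℕ)]
      have hcast : (1 : ℂ) - ((xv q k : ℝ) : ℂ) / ((xv q (i : ℕ) : ℝ) : ℂ)
          = (((1 - xv q k / xv q (i : ℕ) : ℝ)) : ℂ) := by
        push_cast
        ring
      rw [hcast, Complex.norm_real, Real.norm_eq_abs]
    rw [tprod_congr hterm, habs k, one_mul]
    have := keybound q hq k
    rw [one_mul] at this
    exact this
end
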